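/- Fix integers and real vectors v_p^ℓ ∈ ℝ^{d^ℓ} (ℓ=1,…,N, p=1,…,m^ℓ) and a splitting of each ξ ∈ ℤ^m into components ξ'_{(ℓ)} ∈ ℤ^{m^ℓ} and ξ''_{(ℓ)} ∈ ℤ^{d^ℓ}. Then the following are equivalent: (1) there exist C, ρ > 0 and n₀ ∈ ℕ such that (∑_{ℓ=1}^N ∑_{p=1}^{m^ℓ} |ξ_{j_p^ℓ} + v_p^ℓ·ξ''_{(ℓ)}|²)^{1/2} ≥ C(1+|ξ|²)^{-ρ} for all ξ ∈ ℤ^m with |ξ| ≥ n₀; (2) there exist B, M > 0 such that for each ξ ∈ ℤ^m \ {0} there exist ℓ and p with |ξ_{j_p^ℓ} + v_p^ℓ·ξ''_{(ℓ)}| ≥ B(1 + |ξ''_{(ℓ)}|)^{-M}. -/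

import Mathlib

set_option maxHeartbeats 2000000

open Finset

/-- Splitting a sum over `Fin m` according to a partition of the index set
into the images of `j` and `i`. -/
lemma sum_split_aux {m n d : ℕ} (hsum : n + d = m)
    (j : Fin n → Fin m) (i : Fin d → Fin m)
    (hj : Function.Injective j) (hi : Function.Injective i)
    (hcompl : ∀ k : Fin m, (∃ p, j p = k) ↔ ¬ ∃ q, i q = k)
    (g : Fin m → ℝ) :
    ∑ p, g (j p) + ∑ q, g (i q) = ∑ k, g k := by
  have hinj : Function.Injective (Sum.elim j i) := by
    intro x y hxy
    cases x with
    | inl p =>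
      cases y with
      | inl p' => exact congrArg Sum.inl (hj hxy)
      | inr q => exact absurd (⟨q, hxy.symm⟩ : ∃ q', i q' = j p) ((hcompl (j p)).mp ⟨p, rfl⟩)
    | inr q =>
      cases y with
      | inl p => exact absurd (⟨q, hxy⟩ : ∃ q', i q' = j p) ((hcompl (j p)).mp ⟨p, rfl⟩)
      | inr q' => exact congrArg Sum.inr (hi hxy)
  have hbij : Function.Bijective (Sum.elim j i) :=
    (Fintype.bijective_iff_injective_and_card _).mpr ⟨hinj, by simp [hsum]⟩
  calc ∑ p, g (j p) + ∑ q, g (i q) = ∑ x : Fin n ⊕ Fin d, g (Sum.elim j i x) := by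
        rw [Fintype.sum_sum_type]; rfl
    _ = ∑ k, g k := Fintype.sum_bijective _ hbij _ _ (fun _ => rfl)

/-!
Equivalence of the two Diophantine conditions (simultaneous approximability) on `ℤ^m`.
For each `ℓ < N`, the index set `{0, …, m-1}` is split into `j ℓ` (of size `ml ℓ`) and the
complementary indices `i ℓ` (of size `dl ℓ`); `ξ''_{(ℓ)}` denotes the corresponding
sub-vector of `ξ`, and `v ℓ p ∈ ℝ^{dl ℓ}`.
-/
theorem diophantine_conditions_equivalent
    (m N : ℕ) (hN : 0 < N)
    (ml dl : Fin N → ℕ) (hml : ∀ l, 0 < ml l) (hdl : ∀ l, 0 < dl l)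
    (hsum : ∀ l, ml l + dl l = m)
    (j : (l : Fin N) → Fin (ml l) → Fin m)
    (i : (l : Fin N) → Fin (dl l) → Fin m)
    (hj : ∀ l, StrictMono (j l)) (hi : ∀ l, StrictMono (i l))
    (hcompl : ∀ (l : Fin N) (k : Fin m), (∃ p, j l p = k) ↔ ¬ ∃ q, i l q = k)
    (v : (l : Fin N) → Fin (ml l) → Fin (dl l) → ℝ) :
    (∃ C ρ : ℝ, 0 < C ∧ 0 < ρ ∧ ∃ n₀ : ℕ,
      ∀ ξ : Fin m → ℤ, (n₀ : ℝ) ≤ Real.sqrt (∑ k, ((ξ k : ℝ)) ^ 2) →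
        Real.sqrt (∑ l, ∑ p,
            ((ξ (j l p) : ℝ) + ∑ q, v l p q * (ξ (i l q) : ℝ)) ^ 2) ≥
          C * (1 + ∑ k, ((ξ k : ℝ)) ^ 2) ^ (-ρ)) ↔
    (∃ B M : ℝ, 0 < B ∧ 0 < M ∧
      ∀ ξ : Fin m → ℤ, ξ ≠ 0 →
        ∃ (l : Fin N) (p : Fin (ml l)),
          |(ξ (j l p) : ℝ) + ∑ q, v l p q * (ξ (i l q) : ℝ)| ≥
            B * (1 + Real.sqrt (∑ q, ((ξ (i l q) : ℝ)) ^ 2)) ^ (-M)) := by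
  have hm : 0 < m := by
    have h1 := hsum ⟨0, hN⟩; have h2 := hml ⟨0, hN⟩; omega
  constructor
  · -- (1) ⇒ (2)
    rintro ⟨C, ρ, hC, hρ, n₀, h1⟩
    set W : ℝ := 1 + ∑ l, ∑ p, ∑ q, |v l p q| with hWdef
    have hWsum : (0:ℝ) ≤ ∑ l, ∑ p, ∑ q, |v l p q| := by positivity
    have hW1 : (1:ℝ) ≤ W := by rw [hWdef]; linarith
    have hW0 : (0:ℝ) < W := by linarith
    have hWb : ∀ l p, ∑ q, |v l p q| ≤ W := by
      intro l p
      have h1' : ∑ q, |v l p q| ≤ ∑ p', ∑ q, |v l p' q| :=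
        Finset.single_le_sum (f := fun p' => ∑ q, |v l p' q|)
          (fun p' _ => by positivity) (mem_univ p)
      have h2' : ∑ p', ∑ q, |v l p' q| ≤ ∑ l', ∑ p', ∑ q, |v l' p' q| :=
        Finset.single_le_sum (f := fun l' => ∑ p', ∑ q, |v l' p' q|)
          (fun l' _ => by positivity) (mem_univ l)
      rw [hWdef]; linarith
    set t : ℕ := n₀ + 1 with htdef
    have ht1 : (1:ℝ) ≤ (t:ℝ) := by
      have : 1 ≤ t := by omega
      exact_mod_cast this
    have ht0 : (0:ℝ) < (t:ℝ) := by linarith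
    have htn : (n₀:ℝ) ≤ (t:ℝ) := by
      have : n₀ ≤ t := by omega
      exact_mod_cast this
    set C₁ : ℝ := C * (t:ℝ) ^ (-(1+2*ρ)) with hC₁def
    have hC₁0 : 0 < C₁ := by rw [hC₁def]; positivity
    set K : ℝ := Real.sqrt ((N:ℝ) * (m:ℝ)) with hKdef
    have hK0 : 0 < K := Real.sqrt_pos.mpr (by positivity)
    set A2 : ℝ := (m:ℝ) * W^2 + 2 with hA2def
    set B : ℝ := min 1 (C₁ / K * A2 ^ (-ρ)) with hBdef
    have hB0 : 0 < B := lt_min one_pos (by positivity)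
    refine ⟨B, 2*ρ, hB0, by positivity, fun ξ hξ0 => ?_⟩
    set X : ℝ := ∑ k, ((ξ k:ℝ))^2 with hXdef
    have hX0 : (0:ℝ) ≤ X := by rw [hXdef]; positivity
    have hXone : (1:ℝ) ≤ X := by
      obtain ⟨k, hk⟩ := Function.ne_iff.mp hξ0
      have hk' : ξ k ≠ 0 := by simpa using hk
      have h1' : (1:ℤ) ≤ (ξ k)^2 := by
        have := Int.one_le_abs hk'
        nlinarith [sq_abs (ξ k)]
      have h2' : (1:ℝ) ≤ ((ξ k:ℝ))^2 := by exact_mod_cast h1'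
      refine le_trans h2' ?_
      rw [hXdef]
      exact Finset.single_le_sum (f := fun k' => ((ξ k':ℝ))^2)
        (fun k' _ => sq_nonneg _) (mem_univ k)
    set F : ℝ := ∑ l, ∑ p, ((ξ (j l p):ℝ) + ∑ q, v l p q * (ξ (i l q):ℝ))^2 with hFdef
    have hF0 : (0:ℝ) ≤ F := by rw [hFdef]; positivity
    -- apply (1) to t • ξ
    have hf : C₁ * (1+X)^(-ρ) ≤ Real.sqrt F := by
      have hXt : ∑ k, ((((t:ℤ) * ξ k : ℤ)):ℝ)^2 = (t:ℝ)^2 * X := by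
        rw [hXdef, Finset.mul_sum]
        refine Finset.sum_congr rfl fun k _ => ?_
        push_cast; ring
      have hcond : (n₀:ℝ) ≤ Real.sqrt (∑ k, ((((t:ℤ) * ξ k : ℤ)):ℝ)^2) := by
        rw [hXt, Real.sqrt_mul (by positivity)]
        have hs1 : (1:ℝ) ≤ Real.sqrt X := by
          rw [show (1:ℝ) = Real.sqrt 1 by simp]
          exact Real.sqrt_le_sqrt hXone
        have hs2 : Real.sqrt ((t:ℝ)^2) = (t:ℝ) := Real.sqrt_sq ht0.le
        rw [hs2]
        nlinarith
      have key := h1 (fun k => (t:ℤ) * ξ k) hcond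
      beta_reduce at key
      have hFt : (∑ l, ∑ p, ((((t:ℤ) * ξ (j l p) : ℤ):ℝ)
          + ∑ q, v l p q * (((t:ℤ) * ξ (i l q) : ℤ):ℝ))^2) = (t:ℝ)^2 * F := by
        rw [hFdef, Finset.mul_sum]
        refine Finset.sum_congr rfl fun l _ => ?_
        rw [Finset.mul_sum]
        refine Finset.sum_congr rfl fun p _ => ?_
        have hlin : (((t:ℤ) * ξ (j l p) : ℤ):ℝ) + ∑ q, v l p q * (((t:ℤ) * ξ (i l q) : ℤ):ℝ)
            = (t:ℝ) * ((ξ (j l p):ℝ) + ∑ q, v l p q * (ξ (i l q):ℝ)) := by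
          push_cast
          rw [mul_add, Finset.mul_sum]
          congr 1
          exact Finset.sum_congr rfl fun q _ => by ring
        rw [hlin]; ring
      rw [hXt, hFt] at key
      have hsq : Real.sqrt ((t:ℝ)^2 * F) = (t:ℝ) * Real.sqrt F := by
        rw [Real.sqrt_mul (by positivity), Real.sqrt_sq ht0.le]
      rw [hsq] at key
      -- key : t * sqrt F ≥ C * (1 + t² X) ^ (-ρ)
      have hle : (1:ℝ) + (t:ℝ)^2 * X ≤ (t:ℝ)^2 * (1+X) := by nlinarith
      have hmono : ((t:ℝ)^2 * (1+X))^(-ρ) ≤ ((1:ℝ) + (t:ℝ)^2 * X)^(-ρ) :=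
        Real.rpow_le_rpow_of_nonpos (by positivity) hle (by linarith)
      have hsplit : ((t:ℝ)^2 * (1+X))^(-ρ) = (t:ℝ)^(-(2*ρ)) * (1+X)^(-ρ) := by
        rw [Real.mul_rpow (by positivity) (by positivity)]
        congr 1
        rw [← Real.rpow_natCast (t:ℝ) 2, ← Real.rpow_mul ht0.le]
        norm_num
      have hexp : (t:ℝ)^(-(1+2*ρ)) = (t:ℝ)^(-(2*ρ)) / (t:ℝ) := by
        rw [show -(1+2*ρ) = -(2*ρ) + (-1) by ring, Real.rpow_add ht0, Real.rpow_neg_one]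
        ring
      have hchain : C * ((t:ℝ)^(-(2*ρ)) * (1+X)^(-ρ)) ≤ (t:ℝ) * Real.sqrt F := by
        calc C * ((t:ℝ)^(-(2*ρ)) * (1+X)^(-ρ)) = C * (((t:ℝ)^2 * (1+X))^(-ρ)) := by
              rw [hsplit]
          _ ≤ C * (((1:ℝ) + (t:ℝ)^2 * X)^(-ρ)) := by
              exact mul_le_mul_of_nonneg_left hmono hC.le
          _ ≤ (t:ℝ) * Real.sqrt F := key
      rw [hC₁def, hexp]
      have hdiv : C * ((t:ℝ)^(-(2*ρ)) * (1+X)^(-ρ)) / (t:ℝ) ≤ Real.sqrt F := by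
        rw [div_le_iff₀ ht0]; linarith [hchain]
      calc C * ((t:ℝ)^(-(2*ρ)) / (t:ℝ)) * (1+X)^(-ρ)
          = C * ((t:ℝ)^(-(2*ρ)) * (1+X)^(-ρ)) / (t:ℝ) := by ring
        _ ≤ Real.sqrt F := hdiv
    have hFpos : 0 < Real.sqrt F := lt_of_lt_of_le (by positivity) hf
    -- extract a large term
    have hexists : ∃ l p, Real.sqrt F / K ≤
        |(ξ (j l p):ℝ) + ∑ q, v l p q * (ξ (i l q):ℝ)| := by
      by_contra hcon
      push_neg at hcon
      have hc0 : 0 < Real.sqrt F / K := div_pos hFpos hK0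
      have hterm : ∀ l p, ((ξ (j l p):ℝ) + ∑ q, v l p q * (ξ (i l q):ℝ))^2
          < (Real.sqrt F / K)^2 := by
        intro l p
        have h := hcon l p
        nlinarith [abs_nonneg ((ξ (j l p):ℝ) + ∑ q, v l p q * (ξ (i l q):ℝ)),
          sq_abs ((ξ (j l p):ℝ) + ∑ q, v l p q * (ξ (i l q):ℝ))]
      have hblock : ∀ l, ∑ p, ((ξ (j l p):ℝ) + ∑ q, v l p q * (ξ (i l q):ℝ))^2
          < (m:ℝ) * (Real.sqrt F / K)^2 := by
        intro l
        have hml' : (ml l : ℝ) < (m:ℝ) := by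
          have h' := hsum l; have h'' := hdl l
          exact_mod_cast (by omega : ml l < m)
        calc ∑ p, ((ξ (j l p):ℝ) + ∑ q, v l p q * (ξ (i l q):ℝ))^2
            ≤ ∑ _p : Fin (ml l), (Real.sqrt F / K)^2 :=
              Finset.sum_le_sum fun p _ => (hterm l p).le
          _ = (ml l : ℝ) * (Real.sqrt F / K)^2 := by simp [mul_comm]
          _ < (m:ℝ) * (Real.sqrt F / K)^2 :=
              mul_lt_mul_of_pos_right hml' (by positivity)
      have hFlt : F < (N:ℝ) * ((m:ℝ) * (Real.sqrt F / K)^2) := by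
        rw [hFdef]
        calc ∑ l, ∑ p, ((ξ (j l p):ℝ) + ∑ q, v l p q * (ξ (i l q):ℝ))^2
            < ∑ _l : Fin N, (m:ℝ) * (Real.sqrt F / K)^2 :=
              Finset.sum_lt_sum_of_nonempty ⟨⟨0,hN⟩, mem_univ _⟩ fun l _ => hblock l
          _ = (N:ℝ) * ((m:ℝ) * (Real.sqrt F / K)^2) := by simp [mul_comm]
      have hKsq : K^2 = (N:ℝ) * (m:ℝ) := Real.sq_sqrt (by positivity)
      have hFsq : Real.sqrt F ^ 2 = F := Real.sq_sqrt hF0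
      rw [div_pow, hKsq, hFsq] at hFlt
      have hN' : (N:ℝ) ≠ 0 := by positivity
      have hm' : (m:ℝ) ≠ 0 := by positivity
      have heq : (N:ℝ) * ((m:ℝ) * (F / ((N:ℝ) * (m:ℝ)))) = F := by field_simp
      rw [heq] at hFlt
      exact lt_irrefl F hFlt
    obtain ⟨l₀, p₀, hmax⟩ := hexists
    by_cases hbig : ∃ l p, 1 ≤ |(ξ (j l p):ℝ) + ∑ q, v l p q * (ξ (i l q):ℝ)|
    · obtain ⟨l, p, hge⟩ := hbig
      refine ⟨l, p, ?_⟩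
      have hS0 : 0 ≤ Real.sqrt (∑ q, ((ξ (i l q):ℝ))^2) := Real.sqrt_nonneg _
      have hr1 : (1 + Real.sqrt (∑ q, ((ξ (i l q):ℝ))^2)) ^ (-(2*ρ)) ≤ 1 :=
        Real.rpow_le_one_of_one_le_of_nonpos (by linarith) (by linarith)
      have hrn : 0 ≤ (1 + Real.sqrt (∑ q, ((ξ (i l q):ℝ))^2)) ^ (-(2*ρ)) :=
        Real.rpow_nonneg (by linarith) _
      have hB1 : B ≤ 1 := min_le_left _ _
      have : B * (1 + Real.sqrt (∑ q, ((ξ (i l q):ℝ))^2)) ^ (-(2*ρ)) ≤ 1 := by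
        nlinarith
      linarith
    · push_neg at hbig
      refine ⟨l₀, p₀, ?_⟩
      set S : ℝ := Real.sqrt (∑ q, ((ξ (i l₀ q):ℝ))^2) with hSdef
      have hS0 : (0:ℝ) ≤ S := Real.sqrt_nonneg _
      have hSsq : S^2 = ∑ q, ((ξ (i l₀ q):ℝ))^2 := Real.sq_sqrt (by positivity)
      have hxi : ∀ q, |(ξ (i l₀ q):ℝ)| ≤ S := by
        intro q
        rw [hSdef, ← Real.sqrt_sq_eq_abs]
        exact Real.sqrt_le_sqrt
          (Finset.single_le_sum (f := fun q' => ((ξ (i l₀ q'):ℝ))^2)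
            (fun q' _ => sq_nonneg _) (mem_univ q))
      have hxj : ∀ p, ((ξ (j l₀ p):ℝ))^2 ≤ W^2 * (1+S)^2 := by
        intro p
        have ha1 := (hbig l₀ p).le
        have ha2 : |∑ q, v l₀ p q * (ξ (i l₀ q):ℝ)| ≤ W * S := by
          calc |∑ q, v l₀ p q * (ξ (i l₀ q):ℝ)| ≤ ∑ q, |v l₀ p q * (ξ (i l₀ q):ℝ)| :=
                Finset.abs_sum_le_sum_abs _ _
            _ ≤ ∑ q, |v l₀ p q| * S := Finset.sum_le_sum fun q _ => by
                rw [abs_mul]; exact mul_le_mul_of_nonneg_left (hxi q) (abs_nonneg _)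
            _ = (∑ q, |v l₀ p q|) * S := by rw [Finset.sum_mul]
            _ ≤ W * S := mul_le_mul_of_nonneg_right (hWb l₀ p) hS0
        have ha3 : |(ξ (j l₀ p):ℝ)| ≤ 1 + W * S := by
          have habs : |(ξ (j l₀ p):ℝ)| ≤
              |(ξ (j l₀ p):ℝ) + ∑ q, v l₀ p q * (ξ (i l₀ q):ℝ)|
              + |∑ q, v l₀ p q * (ξ (i l₀ q):ℝ)| := by
            have := abs_add_le ((ξ (j l₀ p):ℝ) + ∑ q, v l₀ p q * (ξ (i l₀ q):ℝ))
              (-(∑ q, v l₀ p q * (ξ (i l₀ q):ℝ)))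
            simpa using this
          linarith
        have ha4 : |(ξ (j l₀ p):ℝ)| ≤ W * (1+S) := by nlinarith
        nlinarith [abs_nonneg ((ξ (j l₀ p):ℝ)), sq_abs ((ξ (j l₀ p):ℝ))]
      have hXb : 1 + X ≤ A2 * (1+S)^2 := by
        have hsplit := sum_split_aux (hsum l₀) (j l₀) (i l₀) (hj l₀).injective
          (hi l₀).injective (hcompl l₀) (fun k => ((ξ k:ℝ))^2)
        have hjl : ∑ p, ((ξ (j l₀ p):ℝ))^2 ≤ (m:ℝ) * (W^2 * (1+S)^2) := by
          have hml' : (ml l₀ : ℝ) ≤ (m:ℝ) := by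
            have h' := hsum l₀
            exact_mod_cast (by omega : ml l₀ ≤ m)
          calc ∑ p, ((ξ (j l₀ p):ℝ))^2 ≤ ∑ _p : Fin (ml l₀), W^2 * (1+S)^2 :=
                Finset.sum_le_sum fun p _ => hxj p
            _ = (ml l₀ : ℝ) * (W^2 * (1+S)^2) := by simp [mul_comm]
            _ ≤ (m:ℝ) * (W^2 * (1+S)^2) :=
                mul_le_mul_of_nonneg_right hml' (by positivity)
        have hil : ∑ q, ((ξ (i l₀ q):ℝ))^2 = S^2 := hSsq.symm
        have hone : (1:ℝ) ≤ (1+S)^2 := by nlinarith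
        have hXeq : X = ∑ p, ((ξ (j l₀ p):ℝ))^2 + ∑ q, ((ξ (i l₀ q):ℝ))^2 := by
          rw [hXdef, ← hsplit]
        rw [hXeq, hA2def, hil]
        have hm1 : (1:ℝ) ≤ (m:ℝ) := by exact_mod_cast hm
        nlinarith [sq_nonneg W, sq_nonneg (1+S), hS0, hW1, hm1]
      have hmono : (A2 * (1+S)^2) ^ (-ρ) ≤ (1+X) ^ (-ρ) :=
        Real.rpow_le_rpow_of_nonpos (by linarith) hXb (by linarith)
      have hsplitpow : (A2 * (1+S)^2) ^ (-ρ) = A2^(-ρ) * (1+S)^(-(2*ρ)) := by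
        have hA2pos : (0:ℝ) < A2 := by rw [hA2def]; positivity
        rw [Real.mul_rpow hA2pos.le (by positivity)]
        congr 1
        rw [← Real.rpow_natCast (1+S) 2, ← Real.rpow_mul (by positivity)]
        norm_num
      have hstep : C₁/K * (1+X)^(-ρ) ≤ Real.sqrt F / K := by
        rw [div_mul_eq_mul_div]
        exact (div_le_div_iff_of_pos_right hK0).mpr hf
      calc B * (1+S)^(-(2*ρ)) ≤ (C₁ / K * A2^(-ρ)) * (1+S)^(-(2*ρ)) :=
            mul_le_mul_of_nonneg_right (min_le_right _ _)
              (Real.rpow_nonneg (by linarith) _)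
        _ = C₁/K * (A2^(-ρ) * (1+S)^(-(2*ρ))) := by ring
        _ = C₁/K * ((A2 * (1+S)^2)^(-ρ)) := by rw [hsplitpow]
        _ ≤ C₁/K * ((1+X)^(-ρ)) := by
            exact mul_le_mul_of_nonneg_left hmono (by positivity)
        _ ≤ Real.sqrt F / K := hstep
        _ ≤ |(ξ (j l₀ p₀):ℝ) + ∑ q, v l₀ p₀ q * (ξ (i l₀ q):ℝ)| := hmax
  · -- (2) ⇒ (1)
    rintro ⟨B, M, hB, hM, h2⟩
    refine ⟨B * 2 ^ (-(M/2)), M/2, by positivity, by positivity, 1, fun ξ hξ => ?_⟩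
    have hξ0 : ξ ≠ 0 := by
      rintro rfl
      simp at hξ
      norm_num at hξ
    obtain ⟨l, p, hlp⟩ := h2 ξ hξ0
    set X : ℝ := ∑ k, ((ξ k:ℝ))^2 with hXdef
    have hX0 : (0:ℝ) ≤ X := by rw [hXdef]; positivity
    set S : ℝ := Real.sqrt (∑ q, ((ξ (i l q):ℝ))^2) with hSdef
    have hS0 : (0:ℝ) ≤ S := Real.sqrt_nonneg _
    have hSsq : S^2 = ∑ q, ((ξ (i l q):ℝ))^2 := Real.sq_sqrt (by positivity)
    have hsub : ∑ q, ((ξ (i l q):ℝ))^2 ≤ X := by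
      rw [hXdef, ← sum_split_aux (hsum l) (j l) (i l) (hj l).injective
        (hi l).injective (hcompl l) (fun k => ((ξ k:ℝ))^2)]
      have hjn : (0:ℝ) ≤ ∑ p', ((ξ (j l p'):ℝ))^2 := by positivity
      linarith
    -- |a| ≤ sqrt F
    have hfa : |(ξ (j l p):ℝ) + ∑ q, v l p q * (ξ (i l q):ℝ)| ≤
        Real.sqrt (∑ l', ∑ p', ((ξ (j l' p'):ℝ) + ∑ q, v l' p' q * (ξ (i l' q):ℝ))^2) := by
      rw [← Real.sqrt_sq_eq_abs]
      apply Real.sqrt_le_sqrt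
      have t1 : ((ξ (j l p):ℝ) + ∑ q, v l p q * (ξ (i l q):ℝ))^2
          ≤ ∑ p', ((ξ (j l p'):ℝ) + ∑ q, v l p' q * (ξ (i l q):ℝ))^2 :=
        Finset.single_le_sum
          (f := fun p' => ((ξ (j l p'):ℝ) + ∑ q, v l p' q * (ξ (i l q):ℝ))^2)
          (fun p' _ => sq_nonneg _) (mem_univ p)
      have t2 : ∑ p', ((ξ (j l p'):ℝ) + ∑ q, v l p' q * (ξ (i l q):ℝ))^2
          ≤ ∑ l', ∑ p', ((ξ (j l' p'):ℝ) + ∑ q, v l' p' q * (ξ (i l' q):ℝ))^2 :=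
        Finset.single_le_sum
          (f := fun l' => ∑ p', ((ξ (j l' p'):ℝ) + ∑ q, v l' p' q * (ξ (i l' q):ℝ))^2)
          (fun l' _ => by positivity) (mem_univ l)
      exact t1.trans t2
    -- (1+S)^(-M) ≥ 2^(-M/2) (1+X)^(-M/2)
    have hSX : S^2 ≤ X := by rw [hSsq]; exact hsub
    have hbound : (1+S)^2 ≤ 2 * (1+X) := by nlinarith [hSX, hS0, sq_nonneg (1-S)]
    have hkey : (2*(1+X)) ^ (-(M/2)) ≤ (1+S) ^ (-M) := by
      have h2' : (1+S)^(-M) = ((1+S)^((2:ℕ):ℝ))^(-(M/2)) := by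
        rw [← Real.rpow_mul (by linarith)]
        congr 1
        push_cast
        ring
      rw [h2', Real.rpow_natCast]
      exact Real.rpow_le_rpow_of_nonpos (by positivity) hbound (by linarith)
    have hmulpow : (2*(1+X)) ^ (-(M/2)) = 2^(-(M/2)) * (1+X)^(-(M/2)) :=
      Real.mul_rpow (by norm_num) (by linarith)
    calc B * 2 ^ (-(M/2)) * (1+X)^(-(M/2)) = B * ((2*(1+X)) ^ (-(M/2))) := by
          rw [hmulpow]; ring
      _ ≤ B * ((1+S)^(-M)) := mul_le_mul_of_nonneg_left hkey hB.le
      _ ≤ |(ξ (j l p):ℝ) + ∑ q, v l p q * (ξ (i l q):ℝ)| := hlp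
      _ ≤ Real.sqrt (∑ l', ∑ p', ((ξ (j l' p'):ℝ) + ∑ q, v l' p' q * (ξ (i l' q):ℝ))^2) := hfa
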